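/- For integers m, n ≥ 1 define g_{m,n}(x,y) = [ (x − x_{0,n})(y − y_{m,0}) − x_{0,n}·y_{m,0} ]·(x − x_{m,n})^{m−1}·(y − y_{m,n})^{n−1} ∈ ℝ[x,y]. Then g_{m,n} has degree at most m in x and at most n in y, and for all integers 0 ≤ i ≤ m and 0 ≤ j ≤ n: (∂_x^i ∂_y^j g_{m,n})(x_{i,j}, y_{i,j}) = m!·n! if (i,j) = (m,n), and 0 otherwise. Hence g_{m,n} is the classical bivariate Abel polynomial for the partial derivative operators on the grid A·ℕ². -/

import Mathlib

open MvPolynomial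

noncomputable section

/-- `ℝ[x,y] = MvPolynomial (Fin 2) ℝ`, with `x = X 0`, `y = X 1`. -/
abbrev MvP2 := MvPolynomial (Fin 2) ℝ

/-- The partial derivative `∂_{x_i}` as a linear endomorphism. -/
def pE (i : Fin 2) : Module.End ℝ MvP2 :=
  (MvPolynomial.pderiv (R := ℝ) i).toLinearMap

/-- The grid node `x_{i,j} = a₁₁·i + a₁₂·j`. -/
def gridX (A : Matrix (Fin 2) (Fin 2) ℝ) (i j : ℕ) : ℝ := A 0 0 * i + A 0 1 * j

/-- The grid node `y_{i,j} = a₂₁·i + a₂₂·j`. -/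
def gridY (A : Matrix (Fin 2) (Fin 2) ℝ) (i j : ℕ) : ℝ := A 1 0 * i + A 1 1 * j

/- ### Auxiliary lemmas -/

lemma pderiv_aeval_same (k : Fin 2) (f : Polynomial ℝ) :
    pderiv k (Polynomial.aeval (X k : MvP2) f) = Polynomial.aeval (X k : MvP2) f.derivative := by
  induction f using Polynomial.induction_on' with
  | add p q hp hq => simp [hp, hq]
  | monomial n a =>
      simp [Polynomial.aeval_monomial, pderiv_C_mul, pderiv_pow, Polynomial.derivative_monomial,
        Polynomial.aeval_monomial, algebraMap_eq]
      ring

lemma pderiv_aeval_ne {k l : Fin 2} (h : k ≠ l) (f : Polynomial ℝ) :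
    pderiv k (Polynomial.aeval (X l : MvP2) f) = 0 := by
  induction f using Polynomial.induction_on' with
  | add p q hp hq => simp [hp, hq]
  | monomial n a =>
      simp [Polynomial.aeval_monomial, pderiv_C_mul, pderiv_pow, pderiv_X_of_ne (Ne.symm h)]

lemma pderiv_prod_0 (f g : Polynomial ℝ) :
    pderiv (0 : Fin 2) (Polynomial.aeval (X 0 : MvP2) f * Polynomial.aeval (X 1 : MvP2) g)
      = Polynomial.aeval (X 0 : MvP2) f.derivative * Polynomial.aeval (X 1 : MvP2) g := by
  rw [pderiv_mul, pderiv_aeval_same, pderiv_aeval_ne (by decide : (0:Fin 2) ≠ 1)]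
  ring

lemma pderiv_prod_1 (f g : Polynomial ℝ) :
    pderiv (1 : Fin 2) (Polynomial.aeval (X 0 : MvP2) f * Polynomial.aeval (X 1 : MvP2) g)
      = Polynomial.aeval (X 0 : MvP2) f * Polynomial.aeval (X 1 : MvP2) g.derivative := by
  rw [pderiv_mul, pderiv_aeval_same, pderiv_aeval_ne (by decide : (1:Fin 2) ≠ 0)]
  ring

lemma key_iter (i j : ℕ) (f g : Polynomial ℝ) :
    (((pE 0) ^ i * (pE 1) ^ j)) (Polynomial.aeval (X 0 : MvP2) f * Polynomial.aeval (X 1 : MvP2) g)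
      = Polynomial.aeval (X 0 : MvP2) (Polynomial.derivative^[i] f)
        * Polynomial.aeval (X 1 : MvP2) (Polynomial.derivative^[j] g) := by
  rw [Module.End.mul_apply, Module.End.pow_apply, Module.End.pow_apply]
  have h1 : (⇑(pE 1))^[j] (Polynomial.aeval (X 0 : MvP2) f * Polynomial.aeval (X 1 : MvP2) g)
      = Polynomial.aeval (X 0 : MvP2) f
          * Polynomial.aeval (X 1 : MvP2) (Polynomial.derivative^[j] g) := by
    induction j with
    | zero => simp
    | succ k ih =>
        rw [Function.iterate_succ_apply', ih, Function.iterate_succ_apply']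
        exact pderiv_prod_1 _ _
  rw [h1]
  induction i with
  | zero => simp
  | succ k ih =>
      rw [Function.iterate_succ_apply', ih, Function.iterate_succ_apply']
      exact pderiv_prod_0 _ _

lemma eval_aeval (v : Fin 2 → ℝ) (l : Fin 2) (f : Polynomial ℝ) :
    eval v (Polynomial.aeval (X l : MvP2) f) = Polynomial.eval (v l) f := by
  induction f using Polynomial.induction_on' with
  | add p q hp hq => simp [hp, hq]
  | monomial n a => simp [Polynomial.aeval_monomial, algebraMap_eq, Polynomial.eval_monomial]

lemma eval_iter_pow (c t : ℝ) (M i : ℕ) :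
    Polynomial.eval t (Polynomial.derivative^[i] ((Polynomial.X - Polynomial.C c) ^ M))
      = (M.descFactorial i : ℝ) * (t - c) ^ (M - i) := by
  rw [Polynomial.iterate_derivative_X_sub_pow]
  simp [nsmul_eq_mul]

lemma iter_deriv_X_mul (p : Polynomial ℝ) : ∀ i : ℕ,
    Polynomial.derivative^[i+1] (Polynomial.X * p)
      = Polynomial.X * Polynomial.derivative^[i+1] p + (i+1) • Polynomial.derivative^[i] p := by
  intro i
  induction i with
  | zero => simp [Polynomial.derivative_mul]; ring
  | succ k ih =>
      rw [Function.iterate_succ_apply', ih]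
      rw [map_add, Polynomial.derivative_mul, map_nsmul, Polynomial.derivative_X,
        ← Function.iterate_succ_apply' Polynomial.derivative (k+1),
        ← Function.iterate_succ_apply' Polynomial.derivative k]
      simp only [nsmul_eq_mul, Nat.succ_eq_add_one]
      push_cast
      ring

lemma eval_iter_X_mul_pow (c t : ℝ) (M i : ℕ) :
    Polynomial.eval t
        (Polynomial.derivative^[i] (Polynomial.X * (Polynomial.X - Polynomial.C c) ^ M))
      = t * (M.descFactorial i : ℝ) * (t - c) ^ (M - i)
        + (i : ℝ) * (M.descFactorial (i-1) : ℝ) * (t - c) ^ (M - (i-1)) := by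
  cases i with
  | zero => simp
  | succ k =>
      rw [iter_deriv_X_mul]
      simp only [Polynomial.eval_add, Polynomial.eval_mul, Polynomial.eval_X, nsmul_eq_mul,
        Polynomial.eval_natCast, eval_iter_pow, Nat.add_sub_cancel]
      push_cast
      ring

lemma desc_rec {m i : ℕ} (h1 : 1 ≤ i) (h2 : i ≤ m) :
    ((m-1).descFactorial i : ℝ) = ((m:ℝ) - i) * ((m-1).descFactorial (i-1) : ℝ) := by
  obtain ⟨k, rfl⟩ : ∃ k, i = k + 1 := ⟨i-1, by omega⟩
  rw [Nat.descFactorial_succ, Nat.add_sub_cancel]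
  have hk : k ≤ m - 1 := by omega
  push_cast [Nat.cast_sub hk, Nat.cast_sub (show 1 ≤ m by omega)]
  ring

lemma degXC (k l : Fin 2) (r : ℝ) : degreeOf k (X l - C r : MvP2) ≤ if k = l then 1 else 0 := by
  refine le_trans (degreeOf_sub_le _ _ _) ?_
  simp [degreeOf_X, degreeOf_C]

/-- the polynomial
`g_{m,n} = [(x−x_{0,n})(y−y_{m,0}) − x_{0,n}y_{m,0}]·(x−x_{m,n})^{m−1}(y−y_{m,n})^{n−1}`
has degree at most `m` in `x` and at most `n` in `y`, and satisfies
`(∂_x^i ∂_y^j g_{m,n})(x_{i,j}, y_{i,j}) = m!·n!·δ_{(i,j),(m,n)}` for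
`i ≤ m`, `j ≤ n`; hence it is the classical bivariate Abel polynomial on `A·ℕ²`. -/
theorem classical_bivariate_abel (A : Matrix (Fin 2) (Fin 2) ℝ)
    (m n : ℕ) (hm : 1 ≤ m) (hn : 1 ≤ n)
    (g : MvP2)
    (hg : g = ((X 0 - C (gridX A 0 n)) * (X 1 - C (gridY A m 0)) -
          C (gridX A 0 n * gridY A m 0)) *
        (X 0 - C (gridX A m n)) ^ (m - 1) * (X 1 - C (gridY A m n)) ^ (n - 1)) :
    degreeOf 0 g ≤ m ∧ degreeOf 1 g ≤ n ∧
    ∀ i ≤ m, ∀ j ≤ n,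
      eval ![gridX A i j, gridY A i j] (((pE 0) ^ i * (pE 1) ^ j) g) =
        if i = m ∧ j = n then (m.factorial * n.factorial : ℝ) else 0 := by
  set a' := gridX A 0 n with ha'
  set b' := gridY A m 0 with hb'
  set c' := gridX A m n with hc'
  set d' := gridY A m n with hd'
  refine ⟨?_, ?_, ?_⟩
  · -- degree in x
    rw [hg]
    have h2 : degreeOf 0 ((X 0 - C a') * (X 1 - C b') - C (a' * b') : MvP2) ≤ 1 := by
      refine le_trans (degreeOf_sub_le _ _ _)
        (max_le ?_ ((degreeOf_C (a'*b') (0:Fin 2)).le.trans (Nat.zero_le 1)))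
      calc degreeOf 0 ((X 0 - C a') * (X 1 - C b') : MvP2)
          ≤ degreeOf 0 (X 0 - C a' : MvP2) + degreeOf 0 (X 1 - C b' : MvP2) :=
            degreeOf_mul_le _ _ _
        _ ≤ 1 + 0 := Nat.add_le_add (by simpa using degXC 0 0 a') (by simpa using degXC 0 1 b')
        _ ≤ 1 := le_refl _
    have h3 : degreeOf 0 ((X 0 - C c') ^ (m - 1) : MvP2) ≤ m - 1 :=
      le_trans (degreeOf_pow_le _ _ _) (by simpa using Nat.mul_le_mul_left (m-1) (degXC 0 0 c'))
    have h4 : degreeOf 0 ((X 1 - C d') ^ (n - 1) : MvP2) ≤ 0 :=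
      le_trans (degreeOf_pow_le _ _ _) (by simpa using Nat.mul_le_mul_left (n-1) (degXC 0 1 d'))
    calc degreeOf 0 _ ≤ degreeOf 0 (((X 0 - C a') * (X 1 - C b') - C (a' * b')) *
          (X 0 - C c') ^ (m - 1) : MvP2) + degreeOf 0 ((X 1 - C d') ^ (n - 1) : MvP2) :=
        degreeOf_mul_le _ _ _
      _ ≤ (1 + (m-1)) + 0 :=
          Nat.add_le_add (le_trans (degreeOf_mul_le _ _ _) (Nat.add_le_add h2 h3)) h4
      _ ≤ m := by omega
  · -- degree in y
    rw [hg]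
    have h2 : degreeOf 1 ((X 0 - C a') * (X 1 - C b') - C (a' * b') : MvP2) ≤ 1 := by
      refine le_trans (degreeOf_sub_le _ _ _)
        (max_le ?_ ((degreeOf_C (a'*b') (1:Fin 2)).le.trans (Nat.zero_le 1)))
      calc degreeOf 1 ((X 0 - C a') * (X 1 - C b') : MvP2)
          ≤ degreeOf 1 (X 0 - C a' : MvP2) + degreeOf 1 (X 1 - C b' : MvP2) :=
            degreeOf_mul_le _ _ _
        _ ≤ 0 + 1 := Nat.add_le_add (by simpa using degXC 1 0 a') (by simpa using degXC 1 1 b')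
        _ ≤ 1 := le_refl _
    have h3 : degreeOf 1 ((X 0 - C c') ^ (m - 1) : MvP2) ≤ 0 :=
      le_trans (degreeOf_pow_le _ _ _) (by simpa using Nat.mul_le_mul_left (m-1) (degXC 1 0 c'))
    have h4 : degreeOf 1 ((X 1 - C d') ^ (n - 1) : MvP2) ≤ n - 1 :=
      le_trans (degreeOf_pow_le _ _ _) (by simpa using Nat.mul_le_mul_left (n-1) (degXC 1 1 d'))
    calc degreeOf 1 _ ≤ degreeOf 1 (((X 0 - C a') * (X 1 - C b') - C (a' * b')) *
          (X 0 - C c') ^ (m - 1) : MvP2) + degreeOf 1 ((X 1 - C d') ^ (n - 1) : MvP2) :=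
        degreeOf_mul_le _ _ _
      _ ≤ (1 + 0) + (n-1) :=
          Nat.add_le_add (le_trans (degreeOf_mul_le _ _ _) (Nat.add_le_add h2 h3)) h4
      _ ≤ n := by omega
  intro i hi j hj
  have hsplit : g =
      Polynomial.aeval (X 0 : MvP2) (Polynomial.X * (Polynomial.X - Polynomial.C c') ^ (m-1)) *
        Polynomial.aeval (X 1 : MvP2) (Polynomial.X * (Polynomial.X - Polynomial.C d') ^ (n-1))
      - b' • (Polynomial.aeval (X 0 : MvP2)
            (Polynomial.X * (Polynomial.X - Polynomial.C c') ^ (m-1)) *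
          Polynomial.aeval (X 1 : MvP2) ((Polynomial.X - Polynomial.C d') ^ (n-1)))
      - a' • (Polynomial.aeval (X 0 : MvP2) ((Polynomial.X - Polynomial.C c') ^ (m-1)) *
          Polynomial.aeval (X 1 : MvP2)
            (Polynomial.X * (Polynomial.X - Polynomial.C d') ^ (n-1))) := by
    rw [hg]
    simp only [map_mul, map_sub, map_pow, Polynomial.aeval_X, Polynomial.aeval_C, algebraMap_eq,
      smul_eq_C_mul, C_mul]
    ring
  rw [hsplit]
  simp only [map_sub, LinearMap.map_smul, key_iter]
  simp only [smul_eq_C_mul, eval_mul, eval_C, eval_aeval,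
    Matrix.cons_val_zero, Matrix.cons_val_one, Matrix.head_cons, eval_iter_X_mul_pow, eval_iter_pow]
  by_cases him : i = m
  · by_cases hjn : j = n
    · subst i; subst j
      rw [if_pos ⟨rfl, rfl⟩]
      have h1 : (m-1).descFactorial m = 0 := Nat.descFactorial_eq_zero_iff_lt.mpr (by omega)
      have h2 : (n-1).descFactorial n = 0 := Nat.descFactorial_eq_zero_iff_lt.mpr (by omega)
      have h3 : (m-1).descFactorial (m-1) = (m-1).factorial := Nat.descFactorial_self _
      have h4 : (n-1).descFactorial (n-1) = (n-1).factorial := Nat.descFactorial_self _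
      simp only [h1, h2, h3, h4, Nat.sub_self, pow_zero, Nat.cast_zero, zero_mul, mul_zero,
        mul_one, add_zero, zero_add, sub_zero]
      rw [← Nat.mul_factorial_pred (show m ≠ 0 by omega),
        ← Nat.mul_factorial_pred (show n ≠ 0 by omega)]
      push_cast
      ring
    · subst i
      rw [if_neg (by tauto)]
      have hjn' : j < n := by omega
      have h1 : (m-1).descFactorial m = 0 := Nat.descFactorial_eq_zero_iff_lt.mpr (by omega)
      have h3 : (m-1).descFactorial (m-1) = (m-1).factorial := Nat.descFactorial_self _
      simp only [h1, h3, Nat.sub_self, pow_zero, Nat.cast_zero, zero_mul, mul_zero,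
        mul_one, add_zero, zero_add, sub_zero]
      rcases Nat.eq_zero_or_pos j with hj0 | hj1
      · subst hj0
        simp only [Nat.cast_zero, zero_mul, mul_zero, add_zero, ha', hb', hc', hd', gridX, gridY]
        push_cast
        ring
      · rw [desc_rec hj1 hj, show n-1-(j-1) = (n-1-j)+1 by omega, pow_succ]
        simp only [ha', hb', hc', hd', gridX, gridY]
        push_cast
        ring
  · rw [if_neg (by tauto)]
    have him' : i < m := by omega
    by_cases hjn : j = n
    · subst j
      have h2 : (n-1).descFactorial n = 0 := Nat.descFactorial_eq_zero_iff_lt.mpr (by omega)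
      have h4 : (n-1).descFactorial (n-1) = (n-1).factorial := Nat.descFactorial_self _
      simp only [h2, h4, Nat.sub_self, pow_zero, Nat.cast_zero, zero_mul, mul_zero,
        mul_one, add_zero, zero_add, sub_zero]
      rcases Nat.eq_zero_or_pos i with hi0 | hi1
      · subst hi0
        simp only [Nat.cast_zero, zero_mul, mul_zero, add_zero, ha', hb', hc', hd', gridX, gridY]
        push_cast
        ring
      · rw [desc_rec hi1 hi, show m-1-(i-1) = (m-1-i)+1 by omega, pow_succ]
        simp only [ha', hb', hc', hd', gridX, gridY]
        push_cast
        ring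
    · have hjn' : j < n := by omega
      rcases Nat.eq_zero_or_pos i with hi0 | hi1
      · subst hi0
        rcases Nat.eq_zero_or_pos j with hj0 | hj1
        · subst hj0
          simp only [Nat.cast_zero, zero_mul, mul_zero, add_zero, ha', hb', hc', hd',
            gridX, gridY]
          push_cast
          ring
        · rw [desc_rec hj1 hj, show n-1-(j-1) = (n-1-j)+1 by omega, pow_succ]
          simp only [Nat.cast_zero, zero_mul, mul_zero, add_zero, ha', hb', hc', hd',
            gridX, gridY]
          push_cast
          ring
      · rcases Nat.eq_zero_or_pos j with hj0 | hj1
        · subst hj0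
          rw [desc_rec hi1 hi, show m-1-(i-1) = (m-1-i)+1 by omega, pow_succ]
          simp only [Nat.cast_zero, zero_mul, mul_zero, add_zero, ha', hb', hc', hd',
            gridX, gridY]
          push_cast
          ring
        · rw [desc_rec hi1 hi, show m-1-(i-1) = (m-1-i)+1 by omega, pow_succ,
            desc_rec hj1 hj, show n-1-(j-1) = (n-1-j)+1 by omega, pow_succ]
          simp only [ha', hb', hc', hd', gridX, gridY]
          push_cast
          ring

end
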